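/- The hazard rate h(x) = f(x)/(1 - F(x)) of the unit-Gompertz distribution satisfies lim_{x→0+} h(x) = 0 and lim_{x→1-} h(x) = +∞. -/

import Mathlib

open Real Filter

theorem unitGompertz_hazard_limits (α β : ℝ) (hα : 0 < α) (hβ : 0 < β) :
    let h : ℝ → ℝ := fun x =>
      (α * β * Real.exp (-α * (1 / x ^ β - 1)) / x ^ (1 + β)) /
        (1 - Real.exp (-α * (1 / x ^ β - 1)))
    Tendsto h (nhdsWithin 0 (Set.Ioi (0:ℝ))) (nhds 0) ∧
    Tendsto h (nhdsWithin 1 (Set.Iio (1:ℝ))) atTop := by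
  intro h
  have hβne : β ≠ 0 := hβ.ne'
  constructor
  · -- limit at 0⁺
    -- t(x) = (x^β)⁻¹ → ∞
    have ht : Tendsto (fun x : ℝ => (x ^ β)⁻¹) (nhdsWithin 0 (Set.Ioi 0)) atTop := by
      apply Filter.Tendsto.inv_tendsto_nhdsGT_zero
      rw [tendsto_nhdsWithin_iff]
      constructor
      · have : ContinuousAt (fun x : ℝ => x ^ β) 0 :=
          Real.continuousAt_rpow_const 0 β (Or.inr hβ.le)
        have h0 : (0:ℝ) ^ β = 0 := Real.zero_rpow hβne
        simpa [h0] using (this.tendsto.mono_left nhdsWithin_le_nhds)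
      · filter_upwards [self_mem_nhdsWithin] with x hx
        exact Real.rpow_pos_of_pos hx β
    -- numerator core tends to 0
    have hcore : Tendsto (fun x : ℝ => ((x ^ β)⁻¹) ^ ((1 + β) / β) *
        Real.exp (-α * (x ^ β)⁻¹)) (nhdsWithin 0 (Set.Ioi 0)) (nhds 0) :=
      (tendsto_rpow_mul_exp_neg_mul_atTop_nhds_zero ((1 + β) / β) α hα).comp ht
    -- exp term → 0
    have hexp0 : Tendsto (fun x : ℝ => Real.exp (-α * (1 / x ^ β - 1)))
        (nhdsWithin 0 (Set.Ioi 0)) (nhds 0) := by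
      apply Real.tendsto_exp_atBot.comp
      have h1 : Tendsto (fun x : ℝ => 1 / x ^ β - 1) (nhdsWithin 0 (Set.Ioi 0)) atTop := by
        simpa [one_div, sub_eq_add_neg] using ht.atTop_add (tendsto_const_nhds (x := (-1 : ℝ)))
      have := h1.const_mul_atTop_of_neg (neg_neg_iff_pos.mpr hα : -α < 0)
      exact this
    have hden : Tendsto (fun x : ℝ => 1 - Real.exp (-α * (1 / x ^ β - 1)))
        (nhdsWithin 0 (Set.Ioi 0)) (nhds 1) := by
      simpa using (tendsto_const_nhds (x := (1:ℝ))).sub hexp0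
    have hnum : Tendsto (fun x : ℝ => α * β * Real.exp (-α * (1 / x ^ β - 1)) / x ^ (1 + β))
        (nhdsWithin 0 (Set.Ioi 0)) (nhds 0) := by
      have heq : ∀ᶠ x in nhdsWithin (0:ℝ) (Set.Ioi 0),
          α * β * Real.exp (-α * (1 / x ^ β - 1)) / x ^ (1 + β) =
          (α * β * Real.exp α) * (((x ^ β)⁻¹) ^ ((1 + β) / β) *
            Real.exp (-α * (x ^ β)⁻¹)) := by
        filter_upwards [self_mem_nhdsWithin] with x hx
        have hxpos : (0:ℝ) < x := hx
        have hb : ((x ^ β)⁻¹) ^ ((1 + β) / β) = (x ^ (1 + β))⁻¹ := by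
          rw [← Real.rpow_neg hxpos.le, ← Real.rpow_mul hxpos.le, ← Real.rpow_neg hxpos.le]
          congr 1
          field_simp
        have hexp : Real.exp (-α * (1 / x ^ β - 1)) =
            Real.exp α * Real.exp (-α * (x ^ β)⁻¹) := by
          rw [← Real.exp_add]
          congr 1
          field_simp
          ring
        rw [hb, hexp]
        field_simp
      rw [tendsto_congr' heq]
      simpa using (hcore.const_mul (α * β * Real.exp α))
    have := hnum.div hden one_ne_zero
    rw [zero_div] at this; exact this
  · -- limit at 1⁻
    have hmem : ∀ᶠ x in nhdsWithin (1:ℝ) (Set.Iio 1), x ∈ Set.Ioo (0:ℝ) 1 := by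
      have : Set.Ioo (0:ℝ) 1 ∈ nhdsWithin (1:ℝ) (Set.Iio 1) := by
        apply mem_nhdsWithin.mpr
        exact ⟨Set.Ioi 0, isOpen_Ioi, by norm_num, by
          rintro x ⟨hx1, hx2⟩; exact ⟨hx1, hx2⟩⟩
      exact this
    have hcont : ContinuousAt (fun x : ℝ => Real.exp (-α * (1 / x ^ β - 1))) 1 := by
      apply Real.continuous_exp.continuousAt.comp
      apply ContinuousAt.mul continuousAt_const
      apply ContinuousAt.sub _ continuousAt_const
      apply ContinuousAt.div continuousAt_const
      · exact Real.continuousAt_rpow_const 1 β (Or.inl one_ne_zero)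
      · simp
    have hval : Real.exp (-α * (1 / (1:ℝ) ^ β - 1)) = 1 := by simp
    -- denominator tends to 0 within positives
    have hdenpos : ∀ᶠ x in nhdsWithin (1:ℝ) (Set.Iio 1),
        0 < 1 - Real.exp (-α * (1 / x ^ β - 1)) := by
      filter_upwards [hmem] with x hx
      have hlt : x ^ β < 1 := Real.rpow_lt_one hx.1.le hx.2 hβ
      have hpos : (0:ℝ) < x ^ β := Real.rpow_pos_of_pos hx.1 β
      have : (1:ℝ) < 1 / x ^ β := (one_lt_div hpos).mpr hlt
      have : -α * (1 / x ^ β - 1) < 0 := by nlinarith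
      have := Real.exp_lt_one_iff.mpr this
      linarith
    have hden : Tendsto (fun x : ℝ => 1 - Real.exp (-α * (1 / x ^ β - 1)))
        (nhdsWithin 1 (Set.Iio 1)) (nhdsWithin 0 (Set.Ioi 0)) := by
      rw [tendsto_nhdsWithin_iff]
      refine ⟨?_, hdenpos⟩
      have hc2 : ContinuousAt (fun x : ℝ => 1 - Real.exp (-α * (1 / x ^ β - 1))) 1 :=
        continuousAt_const.sub hcont
      have := hc2.tendsto.mono_left (nhdsWithin_le_nhds (s := Set.Iio (1:ℝ)))
      simpa [hval] using this
    have hnum : Tendsto (fun x : ℝ => α * β * Real.exp (-α * (1 / x ^ β - 1)) / x ^ (1 + β))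
        (nhdsWithin 1 (Set.Iio 1)) (nhds (α * β)) := by
      have hc : ContinuousAt (fun x : ℝ =>
          α * β * Real.exp (-α * (1 / x ^ β - 1)) / x ^ (1 + β)) 1 := by
        apply ContinuousAt.div (continuousAt_const.mul hcont)
        · exact Real.continuousAt_rpow_const 1 (1 + β) (Or.inl one_ne_zero)
        · simp
      have := hc.tendsto.mono_left (nhdsWithin_le_nhds (s := Set.Iio (1:ℝ)))
      simpa [hval] using this
    exact hnum.pos_mul_atTop (by positivity) hden.inv_tendsto_nhdsGT_zero |>.congr
      (fun x => (div_eq_mul_inv _ _).symm)
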